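/- Let i ∈ {2, …, L}, let d_{1i}(x) = gcd(m_1(x), m_i(x)) (taken monic), Γ_{1i}(x) = m_1(x)/d_{1i}(x), and Γ_{i1}(x) = m_i(x)/d_{1i}(x). Let a(x) ∈ F[x] and let k_1(x) = (a(x) − [a]_{m_1}(x))/m_1(x) be its folding polynomial with respect to m_1(x). Then d_{1i}(x) divides [a]_{m_i}(x) − [a]_{m_1}(x), and with q_{i1}(x) = ([a]_{m_i}(x) − [a]_{m_1}(x))/d_{1i}(x) one has k_1(x)·Γ_{1i}(x) ≡ q_{i1}(x) (mod Γ_{i1}(x)); consequently, for every Γ̄_{1i}(x) ∈ F[x] with Γ̄_{1i}(x)·Γ_{1i}(x) ≡ 1 (mod Γ_{i1}(x)), it holds that k_1(x) ≡ q_{i1}(x)·Γ̄_{1i}(x) (mod Γ_{i1}(x)). -/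

import Mathlib

open Polynomial
open scoped Classical

/-- with `d_{1i} = gcd(m_1, m_i)`, `Γ_{1i} = m_1/d_{1i}`,
`Γ_{i1} = m_i/d_{1i}`, and `k_1` the folding polynomial of `a` with respect to
`m_1`: `d_{1i}` divides `[a]_{m_i} − [a]_{m_1}`, the quotient
`q_{i1} = ([a]_{m_i} − [a]_{m_1})/d_{1i}` satisfies
`k_1·Γ_{1i} ≡ q_{i1} (mod Γ_{i1})`, and hence for any modular inverse `Γ̄_{1i}` of
`Γ_{1i}` modulo `Γ_{i1}` one has `k_1 ≡ q_{i1}·Γ̄_{1i} (mod Γ_{i1})`. -/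
theorem stmt16 {F : Type*} [Field F] {L : ℕ} (hL : 2 ≤ L)
    (m : Fin L → Polynomial F)
    (hmonic : ∀ i, (m i).Monic)
    (hdist : Function.Injective m)
    (hdeg : ∀ i, 0 < (m i).degree)
    (i : Fin L) (hi : i ≠ ⟨0, by omega⟩)
    (a : Polynomial F)
    (k1 : Polynomial F)
    (hk1 : k1 = (a - a %ₘ m ⟨0, by omega⟩) /ₘ m ⟨0, by omega⟩) :
    gcd (m ⟨0, by omega⟩) (m i) ∣ (a %ₘ m i - a %ₘ m ⟨0, by omega⟩) ∧
    (∀ q : Polynomial F,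
      q = (a %ₘ m i - a %ₘ m ⟨0, by omega⟩) /ₘ gcd (m ⟨0, by omega⟩) (m i) →
      (m i /ₘ gcd (m ⟨0, by omega⟩) (m i)) ∣
        (k1 * (m ⟨0, by omega⟩ /ₘ gcd (m ⟨0, by omega⟩) (m i)) - q) ∧
      ∀ Γbar : Polynomial F,
        (m i /ₘ gcd (m ⟨0, by omega⟩) (m i)) ∣
          (Γbar * (m ⟨0, by omega⟩ /ₘ gcd (m ⟨0, by omega⟩) (m i)) - 1) →
        (m i /ₘ gcd (m ⟨0, by omega⟩) (m i)) ∣ (k1 - q * Γbar)) := by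
  set m0 : Polynomial F := m ⟨0, by omega⟩ with hm0def
  set mi : Polynomial F := m i with hmidef
  set d : Polynomial F := gcd m0 mi with hddef
  have hm0monic : m0.Monic := hmonic _
  have hmimonic : mi.Monic := hmonic _
  have hm0ne : m0 ≠ 0 := hm0monic.ne_zero
  have hd0 : d ≠ 0 := by
    intro h
    exact hm0ne ((gcd_eq_zero_iff m0 mi).mp h).1
  have hdmonic : d.Monic := by
    have := Polynomial.monic_normalize (p := d) hd0
    rwa [hddef, normalize_gcd] at this
  -- helper : monic g dividing p gives g * (p /ₘ g) = p
  have cancel : ∀ (g p : Polynomial F), g.Monic → g ∣ p → g * (p /ₘ g) = p := by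
    intro g p hg hgp
    have h := modByMonic_add_div p g
    rw [(modByMonic_eq_zero_iff_dvd hg).mpr hgp, zero_add] at h
    exact h
  have key0 : m0 * (a /ₘ m0) = a - a %ₘ m0 := by
    have := modByMonic_add_div a m0
    linear_combination this
  have keyi : mi * (a /ₘ mi) = a - a %ₘ mi := by
    have := modByMonic_add_div a mi
    linear_combination this
  have hdm0 : d ∣ m0 := gcd_dvd_left _ _
  have hdmi : d ∣ mi := gcd_dvd_right _ _
  have hdvd : d ∣ (a %ₘ mi - a %ₘ m0) := by
    have h1 : d ∣ (a - a %ₘ m0) := by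
      rw [← key0]; exact hdm0.mul_right _
    have h2 : d ∣ (a - a %ₘ mi) := by
      rw [← keyi]; exact hdmi.mul_right _
    have := dvd_sub h1 h2
    have heq : (a - a %ₘ m0) - (a - a %ₘ mi) = a %ₘ mi - a %ₘ m0 := by ring
    rwa [heq] at this
  refine ⟨hdvd, ?_⟩
  intro q hq
  have hΓ1 : d * (m0 /ₘ d) = m0 := cancel d m0 hdmonic hdm0
  have hΓi : d * (mi /ₘ d) = mi := cancel d mi hdmonic hdmi
  have hqeq : d * q = a %ₘ mi - a %ₘ m0 := by
    rw [hq]; exact cancel d _ hdmonic hdvd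
  have hk1eq : m0 * k1 = a - a %ₘ m0 := by
    rw [hk1]
    exact cancel m0 _ hm0monic ⟨a /ₘ m0, key0.symm⟩
  have hmain : (mi /ₘ d) ∣ (k1 * (m0 /ₘ d) - q) := by
    refine ⟨a /ₘ mi, ?_⟩
    apply mul_left_cancel₀ hd0
    calc d * (k1 * (m0 /ₘ d) - q) = k1 * (d * (m0 /ₘ d)) - d * q := by ring
      _ = (a - a %ₘ m0) - (a %ₘ mi - a %ₘ m0) := by rw [hΓ1, hqeq, ← hk1eq]; ring
      _ = a - a %ₘ mi := by ring
      _ = (d * (mi /ₘ d)) * (a /ₘ mi) := by rw [hΓi, keyi]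
      _ = d * ((mi /ₘ d) * (a /ₘ mi)) := by ring
  refine ⟨hmain, ?_⟩
  intro Γbar hΓbar
  obtain ⟨u, hu⟩ := hmain
  obtain ⟨v, hv⟩ := hΓbar
  exact ⟨Γbar * u - k1 * v, by linear_combination Γbar * hu - k1 * hv⟩
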